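/- For all natural numbers a, b ≥ 1 with (a,b) ≠ (1,1), gcd(a,b) = (⌊4^(ab(ab+a+b)) / ((4^(a²b) − 1)(4^(ab²) − 1))⌋ mod 4^(ab)) − 1. -/

import Mathlib

lemma geom_aux (x : ℕ) (hx : 1 ≤ x) (m : ℕ) :
    (x - 1) * ∑ j ∈ Finset.range m, x ^ j + 1 = x ^ m := by
  induction m with
  | zero => simp
  | succ n ih =>
    rw [Finset.sum_range_succ, Nat.mul_add, pow_succ]
    have h1 : (x - 1) * x ^ n + x ^ n = x ^ n * x := by
      rw [Nat.sub_one_mul, mul_comm x (x^n)]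
      have : x ^ n ≤ x ^ n * x := Nat.le_mul_of_pos_right _ hx
      omega
    linarith [ih, h1]

lemma count_aux (d : ℕ) (hd : 0 < d) (n : ℕ) :
    ((Finset.range (n+1)).filter (d ∣ ·)).card = n / d + 1 := by
  induction n with
  | zero => simp [Finset.filter_singleton, hd.ne']
  | succ n ih =>
    rw [Finset.range_add_one, Finset.filter_insert, Nat.succ_div]
    by_cases h : d ∣ n + 1
    · rw [if_pos h, Finset.card_insert_of_notMem (by simp), ih, if_pos h]
    · rw [if_neg h, ih, if_neg h]

theorem gcd_div_mod_base4 (a b : ℕ) (ha : 1 ≤ a) (hb : 1 ≤ b) (hab : (a, b) ≠ (1, 1)) :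
    Nat.gcd a b =
      (4 ^ (a * b * (a * b + a + b)) / ((4 ^ (a ^ 2 * b) - 1) * (4 ^ (a * b ^ 2) - 1)))
          % 4 ^ (a * b) - 1 := by
  have h1 : ¬(a = 1 ∧ b = 1) := by simpa [Prod.ext_iff] using hab
  have hab2 : 2 ≤ a * b := by
    rcases Nat.lt_or_ge a 2 with h | h
    · have ha1 : a = 1 := by omega
      subst ha1
      have : 2 ≤ b := by omega
      simpa using this
    · calc 2 ≤ a := h
        _ = a * 1 := (mul_one a).symm
        _ ≤ a * b := Nat.mul_le_mul_left a hb
  set q : ℕ := 4 ^ (a * b) with hq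
  have hq16 : 16 ≤ q := by
    calc (16:ℕ) = 4 ^ 2 := by norm_num
      _ ≤ q := Nat.pow_le_pow_right (by norm_num) hab2
  have hqb4b : 4 ^ b ≤ q := Nat.pow_le_pow_right (by norm_num) (Nat.le_mul_of_pos_left b ha)
  have hb2q : 2 * (b + 1) ≤ q := by
    have h2b : b + 1 ≤ 2 ^ b := (Nat.lt_two_pow_self (n := b))
    have : 2 * (b + 1) ≤ 2 ^ (b + 1) := by
      rw [pow_succ, mul_comm ((2:ℕ)^b) 2]; exact Nat.mul_le_mul_left 2 h2b
    have h4 : (2:ℕ) ^ (b+1) ≤ 4 ^ b := by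
      calc (2:ℕ) ^ (b+1) ≤ 2 ^ (2*b) := Nat.pow_le_pow_right (by norm_num) (by omega)
        _ = 4 ^ b := by rw [pow_mul]; norm_num
    omega
  -- rewrite the goal in terms of q
  have e1 : (4:ℕ) ^ (a * b * (a * b + a + b)) = q ^ (a * b + a + b) := by
    rw [hq, ← pow_mul]
  have e2 : (4:ℕ) ^ (a ^ 2 * b) = q ^ a := by
    rw [hq, ← pow_mul]; ring_nf
  have e3 : (4:ℕ) ^ (a * b ^ 2) = q ^ b := by
    rw [hq, ← pow_mul]; ring_nf
  rw [e1, e2, e3]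
  set S : ℕ := ∑ i ∈ Finset.range (b+1), ∑ j ∈ Finset.range (a*i/b + 1), q ^ (a*i - b*j) with hS
  set T : ℕ := ∑ i ∈ Finset.range (b+1), q ^ (a*i % b) with hT
  have hqa1 : 1 ≤ q ^ a := Nat.one_le_pow _ _ (by omega)
  have hqb1 : 1 ≤ q ^ b := Nat.one_le_pow _ _ (by omega)
  have hqa16 : 16 ≤ q ^ a := le_trans hq16 (Nat.le_self_pow (by omega) q)
  have hqb16 : 16 ≤ q ^ b := le_trans hq16 (Nat.le_self_pow (by omega) q)
  -- step 1: per-i identity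
  have step1 : ∀ i, (q ^ b - 1) * (∑ j ∈ Finset.range (a*i/b + 1), q ^ (a*i - b*j))
      + q ^ (a*i % b) = q ^ (a*i + b) := by
    intro i
    have hmd := Nat.mod_add_div (a*i) b
    have hinner : (∑ j ∈ Finset.range (a*i/b + 1), q ^ (a*i - b*j))
        = q ^ (a*i % b) * ∑ j ∈ Finset.range (a*i/b + 1), (q ^ b) ^ j := by
      rw [← Finset.sum_range_reflect]
      rw [Finset.mul_sum]
      apply Finset.sum_congr rfl
      intro j hj
      rw [Finset.mem_range] at hj
      have hj' : j ≤ a*i/b := by omega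
      have hexp : a*i - b*(a*i/b + 1 - 1 - j) = a*i % b + b * j := by
        have hmulsub : b * (a*i/b + 1 - 1 - j) = b * (a*i/b) - b * j := by
          rw [Nat.add_sub_cancel, Nat.mul_sub]
        have hle : b * j ≤ b * (a*i/b) := Nat.mul_le_mul_left b hj'
        rw [hmulsub]
        omega
      rw [hexp, pow_add, pow_mul]
    rw [hinner]
    have hre : (q ^ b - 1) * (q ^ (a*i % b) * ∑ j ∈ Finset.range (a*i/b + 1), (q ^ b) ^ j)
        + q ^ (a*i % b)
        = q ^ (a*i % b) * ((q ^ b - 1) * ∑ j ∈ Finset.range (a*i/b + 1), (q ^ b) ^ j + 1) := by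
      ring
    rw [hre, geom_aux _ hqb1, ← pow_mul q b (a*i/b+1), ← pow_add]
    congr 1
    have hb1 : b * (a*i/b + 1) = b * (a*i/b) + b := by ring
    omega
  -- step 2: sum over i
  have step2 : (q ^ b - 1) * S + T = q ^ b * ∑ i ∈ Finset.range (b+1), (q ^ a) ^ i := by
    rw [hS, hT, Finset.mul_sum, ← Finset.sum_add_distrib]
    rw [Finset.sum_congr rfl (fun i _ => step1 i)]
    rw [Finset.mul_sum]
    apply Finset.sum_congr rfl
    intro i _
    rw [← pow_mul q a i, ← pow_add]
    ring_nf
  -- step 3: the key identity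
  have K : (q ^ a - 1) * ((q ^ b - 1) * S + T) + q ^ b = q ^ (a*b + a + b) := by
    rw [step2]
    have hre2 : (q ^ a - 1) * (q ^ b * ∑ i ∈ Finset.range (b+1), (q ^ a) ^ i) + q ^ b
        = q ^ b * ((q ^ a - 1) * ∑ i ∈ Finset.range (b+1), (q ^ a) ^ i + 1) := by ring
    rw [hre2, geom_aux _ hqa1, ← pow_mul q a (b+1), ← pow_add]
    congr 1
    ring
  -- decomposition N = D*S + R
  have KN : q ^ (a*b + a + b) = (q^a - 1) * (q^b - 1) * S + ((q^a - 1) * T + q^b) := by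
    rw [← K]; ring
  -- remainder bound
  have hTb : 2 * T ≤ q ^ b := by
    have hT1 : T ≤ (b+1) * q ^ (b-1) := by
      rw [hT]
      calc ∑ i ∈ Finset.range (b+1), q ^ (a*i % b) ≤ ∑ i ∈ Finset.range (b+1), q ^ (b-1) := by
            apply Finset.sum_le_sum
            intro i _
            exact Nat.pow_le_pow_right (by omega) (by have := Nat.mod_lt (a*i) (show 0 < b by omega); omega)
        _ = (b+1) * q ^ (b-1) := by rw [Finset.sum_const, Finset.card_range, smul_eq_mul]
    have : 2 * ((b+1) * q ^ (b-1)) ≤ q * q ^ (b-1) := by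
      rw [← mul_assoc]
      exact Nat.mul_le_mul_right _ hb2q
    have hqb' : q * q ^ (b-1) = q ^ b := by
      rw [← pow_succ']
      congr 1
      omega
    omega
  have hR : (q^a - 1) * T + q^b < (q^a - 1) * (q^b - 1) := by
    have hA : q ^ a - 1 + 1 = q ^ a := by omega
    have hB : q ^ b - 1 + 1 = q ^ b := by omega
    set A := q ^ a - 1
    set B := q ^ b - 1
    have hA15 : 15 ≤ A := by omega
    have hB15 : 15 ≤ B := by omega
    have h2T : 2 * T ≤ B + 1 := by omega
    nlinarith [Nat.mul_le_mul_left A h2T, Nat.mul_le_mul_right B hA15]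
  have hD : 0 < (q^a - 1) * (q^b - 1) := Nat.mul_pos (by omega) (by omega)
  -- division
  have hdiv : q ^ (a*b + a + b) / ((q^a - 1) * (q^b - 1)) = S := by
    rw [KN, Nat.mul_add_div hD, Nat.div_eq_of_lt hR, add_zero]
  rw [hdiv]
  -- per-i inner sum mod q
  have hinner_mod : ∀ i, (∑ j ∈ Finset.range (a*i/b + 1), q ^ (a*i - b*j)) % q
      = if b ∣ a * i then 1 else 0 := by
    intro i
    rw [Finset.sum_range_succ]
    have hdvd : q ∣ ∑ j ∈ Finset.range (a*i/b), q ^ (a*i - b*j) := by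
      apply Finset.dvd_sum
      intro j hj
      rw [Finset.mem_range] at hj
      apply dvd_pow_self
      have h1 : b * (j+1) ≤ b * (a*i/b) := Nat.mul_le_mul_left b hj
      have hmd := Nat.mod_add_div (a*i) b
      have hmul : b * (j+1) = b * j + b := by ring
      omega
    have hlast : a*i - b*(a*i/b) = a*i % b := by
      have hmd := Nat.mod_add_div (a*i) b
      omega
    have hX : (∑ j ∈ Finset.range (a*i/b), q ^ (a*i - b*j)) % q = 0 :=
      Nat.mod_eq_zero_of_dvd hdvd
    rw [hlast, Nat.add_mod, hX, zero_add, Nat.mod_mod]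
    by_cases hcase : b ∣ a * i
    · have h0 : a*i % b = 0 := Nat.mod_eq_zero_of_dvd hcase
      rw [if_pos hcase, h0, pow_zero]
      exact Nat.mod_eq_of_lt (by omega)
    · have h0 : a*i % b ≠ 0 := fun h => hcase (Nat.dvd_of_mod_eq_zero h)
      rw [if_neg hcase]
      exact Nat.mod_eq_zero_of_dvd (dvd_pow_self q h0)
  -- divisibility condition in terms of d = b / gcd a b
  have hcond : ∀ i, (b ∣ a * i) ↔ (b / Nat.gcd a b ∣ i) := by
    intro i
    have hg0 : 0 < Nat.gcd a b := Nat.gcd_pos_of_pos_left b (by omega)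
    obtain ⟨a', ha'⟩ := Nat.gcd_dvd_left a b
    obtain ⟨b', hb'⟩ := Nat.gcd_dvd_right a b
    have hda : a / Nat.gcd a b = a' := Nat.div_eq_of_eq_mul_right hg0 ha'
    have hdb : b / Nat.gcd a b = b' := Nat.div_eq_of_eq_mul_right hg0 hb'
    have hcop : Nat.Coprime b' a' := by
      rw [← hda, ← hdb]
      exact (Nat.coprime_div_gcd_div_gcd hg0).symm
    rw [hdb]
    constructor
    · intro h
      have h2 : Nat.gcd a b * b' ∣ Nat.gcd a b * (a' * i) := by
        have hrw : a * i = Nat.gcd a b * (a' * i) := by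
          calc a * i = (Nat.gcd a b * a') * i := by rw [← ha']
            _ = Nat.gcd a b * (a' * i) := by ring
        rw [← hrw, ← hb']
        exact h
      have h3 : b' ∣ a' * i := (mul_dvd_mul_iff_left hg0.ne').mp h2
      exact hcop.dvd_of_dvd_mul_left h3
    · rintro ⟨t, rfl⟩
      have key : a * (b' * t) = b * (a' * t) := by
        calc a * (b' * t) = (Nat.gcd a b * a') * (b' * t) := by rw [← ha']
          _ = (Nat.gcd a b * b') * (a' * t) := by ring
          _ = b * (a' * t) := by rw [← hb']
      exact ⟨a' * t, key⟩
  -- S mod q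
  have hSmod : S % q = Nat.gcd a b + 1 := by
    rw [hS, Finset.sum_nat_mod,
      Finset.sum_congr rfl (fun i _ => hinner_mod i)]
    have : ∀ i ∈ Finset.range (b+1), (if b ∣ a * i then (1:ℕ) else 0)
        = if b / Nat.gcd a b ∣ i then 1 else 0 := by
      intro i _
      simp [hcond i]
    rw [Finset.sum_congr rfl this, Finset.sum_boole]
    have hd0 : 0 < b / Nat.gcd a b :=
      Nat.div_pos (Nat.le_of_dvd (by omega) (Nat.gcd_dvd_right a b)) (Nat.gcd_pos_of_pos_left b (by omega))
    rw [count_aux _ hd0 b, Nat.div_div_self (Nat.gcd_dvd_right a b) (by omega)]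
    have hgb : Nat.gcd a b ≤ b := Nat.le_of_dvd (by omega) (Nat.gcd_dvd_right a b)
    have : Nat.gcd a b + 1 < q := by omega
    norm_cast
    exact Nat.mod_eq_of_lt this
  rw [hSmod]
  omega
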